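/- Let p ∈ (0,1) and let X be the centered normalized Bernoulli variable taking value √((1−p)/p) with probability p and −√(p/(1−p)) with probability 1−p. Let K be the real number with K² log K = 1/(p(1−p)). If p(1−p) ≤ 1/4, then E exp(X²/K²) < 2, i.e. ‖X‖_{ψ₂} ≤ K. -/

import Mathlib

open MeasureTheory ProbabilityTheory

/-- The ψ_α (Orlicz) norm of a real random variable, with the convention `sInf ∅ = ∞`. -/
noncomputable def psiNorm {Ω : Type*} [MeasurableSpace Ω] (μ : Measure Ω) (α : ℝ)
    (X : Ω → ℝ) : ENNReal :=
  sInf {t : ENNReal | ∃ s : ℝ, 0 < s ∧ t = ENNReal.ofReal s ∧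
    (∫⁻ ω, ENNReal.ofReal (Real.exp (|X ω| ^ α / s ^ α)) ∂μ) ≤ 2}

lemma key_ineq (p K : ℝ) (hp0 : 0 < p) (hp1 : p < 1) (hK1 : 1 ≤ K)
    (hK : K ^ 2 * Real.log K = 1 / (p * (1 - p))) :
    p * Real.exp ((1 - p) / p / K ^ 2) + (1 - p) * Real.exp (p / (1 - p) / K ^ 2) < 2 := by
  have hq : 0 < 1 - p := by linarith
  have hpq : 0 < p * (1 - p) := mul_pos hp0 hq
  have hK0 : (0:ℝ) < K := lt_of_lt_of_le one_pos hK1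
  have hKgt : 1 < K := by
    rcases hK1.lt_or_eq with h | h
    · exact h
    · exfalso
      rw [← h, Real.log_one, mul_zero] at hK
      have h2 := one_div_pos.mpr hpq
      linarith [hK, h2]
  have hlog : Real.log K = 1 / (p * (1 - p) * K ^ 2) := by
    field_simp at hK ⊢
    nlinarith [hK]
  have e1 : (1 - p) / p / K ^ 2 = (1 - p) ^ 2 * Real.log K := by
    rw [hlog]; field_simp
  have e2 : p / (1 - p) / K ^ 2 = p ^ 2 * Real.log K := by
    rw [hlog]; field_simp
  have conv : ∀ x : ℝ, 0 ≤ x → x ≤ 1 →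
      Real.exp (x * Real.log K) ≤ 1 + x * (K - 1) := by
    intro x hx hx1
    have h := convexOn_exp.2 (Set.mem_univ (0:ℝ)) (Set.mem_univ (Real.log K))
      (by linarith : (0:ℝ) ≤ 1 - x) hx (by ring)
    simp only [smul_eq_mul, mul_zero, zero_add, Real.exp_zero, Real.exp_log hK0] at h
    linarith
  have c1 := conv ((1 - p) ^ 2) (by positivity) (by nlinarith)
  have c2 := conv (p ^ 2) (by positivity) (by nlinarith)
  rw [e1, e2]
  have hlog2 : 1 - 1 / K ≤ Real.log K := by
    have h := Real.log_le_sub_one_of_pos (show (0:ℝ) < 1 / K by positivity)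
    rw [Real.log_div one_ne_zero (ne_of_gt hK0), Real.log_one] at h
    linarith
  have hfin : p * (1 - p) * (K - 1) < 1 := by
    have h1 : K - 1 < K ^ 2 * Real.log K := by
      have hx : K ^ 2 * (1 - 1 / K) = K - 1 + (K - 1) ^ 2 := by
        field_simp; ring
      have hy := mul_le_mul_of_nonneg_left hlog2 (sq_nonneg K)
      have hz : 0 < (K - 1) ^ 2 := pow_pos (by linarith) 2
      linarith
    rw [hK] at h1
    rw [lt_div_iff₀ hpq] at h1
    linarith [h1]
  nlinarith [mul_le_mul_of_nonneg_left c1 hp0.le, mul_le_mul_of_nonneg_left c2 hq.le]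

theorem centered_bernoulli_psi2 {Ω : Type*} [MeasurableSpace Ω] (μ : Measure Ω)
    [IsProbabilityMeasure μ] (p K : ℝ) (hp0 : 0 < p) (hp1 : p < 1)
    (hpq : p * (1 - p) ≤ 1 / 4) (hK1 : 1 ≤ K)
    (hK : K ^ 2 * Real.log K = 1 / (p * (1 - p)))
    (X : Ω → ℝ) (hX : Measurable X)
    (hXp : μ {ω | X ω = Real.sqrt ((1 - p) / p)} = ENNReal.ofReal p)
    (hXq : μ {ω | X ω = -Real.sqrt (p / (1 - p))} = ENNReal.ofReal (1 - p)) :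
    (∫⁻ ω, ENNReal.ofReal (Real.exp (X ω ^ 2 / K ^ 2)) ∂μ) < 2 ∧
    psiNorm μ 2 X ≤ ENNReal.ofReal K := by
  have hq : 0 < 1 - p := by linarith
  have hK0 : (0:ℝ) < K := lt_of_lt_of_le one_pos hK1
  set a : ℝ := Real.sqrt ((1 - p) / p) with ha
  set b : ℝ := Real.sqrt (p / (1 - p)) with hb
  have ha2 : a ^ 2 = (1 - p) / p := Real.sq_sqrt (by positivity)
  have hb2 : b ^ 2 = p / (1 - p) := Real.sq_sqrt (by positivity)
  set A : Set Ω := {ω | X ω = a} with hA_def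
  set B : Set Ω := {ω | X ω = -b} with hB_def
  have hAm : MeasurableSet A := hX (measurableSet_singleton a)
  have hBm : MeasurableSet B := hX (measurableSet_singleton (-b))
  have hane : a ≠ -b := by
    intro h
    have ha0 : 0 < a := Real.sqrt_pos.mpr (by positivity)
    have hb0 : 0 ≤ b := Real.sqrt_nonneg _
    linarith
  have hdisj : Disjoint A B := by
    rw [Set.disjoint_left]
    intro ω h1 h2
    exact hane (h1 ▸ h2 ▸ rfl)
  have hABc : μ (A ∪ B)ᶜ = 0 := by
    have hU : μ (A ∪ B) = 1 := by
      rw [measure_union hdisj hBm, hXp, hXq, ← ENNReal.ofReal_add hp0.le hq.le]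
      norm_num
    rw [measure_compl (hAm.union hBm) (measure_ne_top μ _), hU, measure_univ,
      tsub_self]
  set c1 : ℝ := Real.exp ((1 - p) / p / K ^ 2) with hc1
  set c2 : ℝ := Real.exp (p / (1 - p) / K ^ 2) with hc2
  set f : Ω → ENNReal := fun ω => ENNReal.ofReal (Real.exp (X ω ^ 2 / K ^ 2)) with hf
  have hint : (∫⁻ ω, f ω ∂μ) = ENNReal.ofReal (p * c1 + (1 - p) * c2) := by
    have hsplit : (∫⁻ ω, f ω ∂μ) =
        (∫⁻ ω in A, f ω ∂μ) + (∫⁻ ω in Aᶜ, f ω ∂μ) :=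
      (lintegral_add_compl f hAm).symm
    have hIA : (∫⁻ ω in A, f ω ∂μ) = ENNReal.ofReal c1 * ENNReal.ofReal p := by
      have hfa : ∀ ω ∈ A, f ω = ENNReal.ofReal c1 := by
        intro ω hω
        have hXa : X ω = a := hω
        simp only [hf]
        rw [hXa, ha2]
      rw [setLIntegral_congr_fun hAm hfa, setLIntegral_const, hXp]
    have hUae : ∀ᵐ ω ∂μ, ω ∈ A ∪ B := by
      rw [ae_iff]
      exact hABc
    have hIAc : (∫⁻ ω in Aᶜ, f ω ∂μ) = ENNReal.ofReal c2 * ENNReal.ofReal (1 - p) := by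
      have hae : ∀ᵐ ω ∂(μ.restrict Aᶜ), f ω = ENNReal.ofReal c2 := by
        rw [ae_restrict_iff' hAm.compl]
        filter_upwards [hUae] with ω hU hAc
        rcases hU with h1 | h2
        · exact absurd h1 hAc
        · have hXb : X ω = -b := h2
          simp only [hf]
          rw [hXb, neg_sq, hb2]
      rw [lintegral_congr_ae hae, lintegral_const, Measure.restrict_apply_univ]
      congr 1
      rw [measure_compl hAm (measure_ne_top μ _), hXp, measure_univ,
        ← ENNReal.ofReal_one, ← ENNReal.ofReal_sub _ hp0.le]
    rw [hsplit, hIA, hIAc, ← ENNReal.ofReal_mul (Real.exp_nonneg _),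
      ← ENNReal.ofReal_mul (Real.exp_nonneg _),
      ← ENNReal.ofReal_add (by positivity) (by positivity)]
    congr 1
    ring
  have hkey := key_ineq p K hp0 hp1 hK1 hK
  have hlt : (∫⁻ ω, f ω ∂μ) < 2 := by
    rw [hint, show (2:ENNReal) = ENNReal.ofReal 2 by norm_num]
    exact ENNReal.ofReal_lt_ofReal_iff (by norm_num) |>.mpr hkey
  refine ⟨hlt, ?_⟩
  unfold psiNorm
  apply sInf_le
  refine ⟨K, hK0, rfl, ?_⟩
  have heq : (∫⁻ ω, ENNReal.ofReal (Real.exp (|X ω| ^ (2:ℝ) / K ^ (2:ℝ))) ∂μ)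
      = ∫⁻ ω, f ω ∂μ := by
    refine lintegral_congr fun ω => ?_
    have h2 : ((2:ℝ)) = ((2:ℕ):ℝ) := by norm_num
    rw [h2, Real.rpow_natCast, Real.rpow_natCast, sq_abs]
  rw [heq]
  exact hlt.le
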